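/- Let X be a mixture set and ≽ a binary relation on X^∞. Suppose (u, δ) and (u′, δ′) both satisfy: u (resp. u′) : X → ℝ is mixture linear and non-constant, δ, δ′ ∈ (0,1), the series ∑_{t=1}^∞ δ^{t−1}u(x_t) and ∑_{t=1}^∞ (δ′)^{t−1}u′(x_t) converge for every x ∈ X^∞, and each represents ≽ (x ≽ y iff the corresponding discounted sums are ordered ≥). Then there exist A > 0 and B ∈ ℝ with u = Au′ + B, and δ = δ′. -/

import Mathlib

/-- A mixture set: a set `X` with an operation `mix x l y` (written `xλy` in the paper),
satisfying the Herstein–Milnor axioms for `l, m ∈ [0,1]`. -/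
structure MixtureSpace (X : Type*) where
  mix : X → ℝ → X → X
  mix_one : ∀ x y : X, mix x 1 y = x
  mix_comm : ∀ (x y : X), ∀ l ∈ Set.Icc (0:ℝ) 1, mix x l y = mix y (1 - l) x
  mix_assoc : ∀ (x y : X), ∀ l ∈ Set.Icc (0:ℝ) 1, ∀ m ∈ Set.Icc (0:ℝ) 1,
    mix (mix x m y) l y = mix x (l * m) y

/-- `u : X → ℝ` is mixture linear. -/
def MixtureSpace.linear {X : Type*} (M : MixtureSpace X) (u : X → ℝ) : Prop :=
  ∀ (x y : X), ∀ l ∈ Set.Icc (0:ℝ) 1, u (M.mix x l y) = l * u x + (1 - l) * u y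

/-- Strict (asymmetric) part of a relation. -/
def strictP {α : Type*} (R : α → α → Prop) (x y : α) : Prop := R x y ∧ ¬ R y x

/-- Componentwise mixture of finite streams. -/
def mixStream {X : Type*} (M : MixtureSpace X) {n : ℕ} (x : Fin n → X) (l : ℝ)
    (y : Fin n → X) : Fin n → X := fun t => M.mix (x t) l (y t)

/-- Componentwise mixture of infinite streams. -/
def mixSeq {X : Type*} (M : MixtureSpace X) (x : ℕ → X) (l : ℝ) (y : ℕ → X) :
    ℕ → X := fun t => M.mix (x t) l (y t)

/-! ### Finite-horizon axioms -/

/-- F1: weak order (complete and transitive). -/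
def AxF1 {X : Type*} {n : ℕ} (R : (Fin n → X) → (Fin n → X) → Prop) : Prop :=
  (∀ x y, R x y ∨ R y x) ∧ Transitive R

/-- F2: non-triviality (a ≻ b for some a, b in the induced relation). -/
def AxF2 {X : Type*} {n : ℕ} (R : (Fin n → X) → (Fin n → X) → Prop) : Prop :=
  ∃ a b : X, strictP R (fun _ => a) (fun _ => b)

/-- F3: mixture independence. -/
def AxF3 {X : Type*} (M : MixtureSpace X) {n : ℕ}
    (R : (Fin n → X) → (Fin n → X) → Prop) : Prop :=
  ∀ x y z : Fin n → X, ∀ l ∈ Set.Ioo (0:ℝ) 1,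
    (R x y ↔ R (mixStream M x l z) (mixStream M y l z))

/-- F4: mixture continuity. -/
def AxF4 {X : Type*} (M : MixtureSpace X) {n : ℕ}
    (R : (Fin n → X) → (Fin n → X) → Prop) : Prop :=
  ∀ x y z : Fin n → X,
    IsClosed {l : ℝ | l ∈ Set.Icc (0:ℝ) 1 ∧ R (mixStream M x l z) y} ∧
    IsClosed {l : ℝ | l ∈ Set.Icc (0:ℝ) 1 ∧ R y (mixStream M x l z)}

/-- F5: monotonicity. -/
def AxF5 {X : Type*} {n : ℕ} (R : (Fin n → X) → (Fin n → X) → Prop) : Prop :=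
  ∀ x y : Fin n → X, (∀ t, R (fun _ => x t) (fun _ => y t)) → R x y

/-- `(u, w)` provides an AA representation for `R` on `X^n`. -/
def AARep {X : Type*} (M : MixtureSpace X) {n : ℕ}
    (R : (Fin n → X) → (Fin n → X) → Prop) (u : X → ℝ) (w : Fin n → ℝ) : Prop :=
  M.linear u ∧ (∃ a b : X, u a ≠ u b) ∧ (∀ t, 0 ≤ w t) ∧ (∃ t, 0 < w t) ∧
  ∀ x y : Fin n → X, (R x y ↔ (∑ t, w t * u (x t)) ≥ ∑ t, w t * u (y t))

/-! ### Infinite-horizon notions -/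

/-- Ultimately constant stream (equals `x0` from some period on). -/
def UltConst {X : Type*} (x0 : X) (x : ℕ → X) : Prop := ∃ T, ∀ t, T ≤ t → x t = x0

/-- Member of `X**`: ultimately constant or constant. -/
def InXSS {X : Type*} (x0 : X) (x : ℕ → X) : Prop :=
  UltConst x0 x ∨ ∃ a, ∀ t, x t = a

/-- `[a]_k`: the stream with `a` in period `k` and `x0` elsewhere. -/
def bracket {X : Type*} (x0 : X) (a : X) (k : ℕ) : ℕ → X :=
  fun t => if t = k then a else x0

/-- `(x₁, …, x_{k−1}, a, x_{k+1}, …, x_T, x0, x0, …)`. -/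
def truncMod {X : Type*} (x0 : X) (x : ℕ → X) (k : ℕ) (a : X) (T : ℕ) : ℕ → X :=
  fun t => if t = k then a else if t ≤ T then x t else x0

/-- I1: weak order. -/
def AxI1 {X : Type*} (R : (ℕ → X) → (ℕ → X) → Prop) : Prop :=
  (∀ x y, R x y ∨ R y x) ∧ Transitive R

/-- I2: non-triviality `a ≻ x0 ≻ b` in the induced relation. -/
def AxI2 {X : Type*} (x0 : X) (R : (ℕ → X) → (ℕ → X) → Prop) : Prop :=
  ∃ a b : X, strictP R (fun _ => a) (fun _ => x0) ∧ strictP R (fun _ => x0) (fun _ => b)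

/-- I3: mixture independence on `X**`. -/
def AxI3 {X : Type*} (M : MixtureSpace X) (x0 : X)
    (R : (ℕ → X) → (ℕ → X) → Prop) : Prop :=
  ∀ x y z : ℕ → X, InXSS x0 x → InXSS x0 y → InXSS x0 z →
    ∀ l ∈ Set.Ioo (0:ℝ) 1, (R x y ↔ R (mixSeq M x l z) (mixSeq M y l z))

/-- I4: mixture continuity. -/
def AxI4 {X : Type*} (M : MixtureSpace X) (x0 : X)
    (R : (ℕ → X) → (ℕ → X) → Prop) : Prop :=
  ∀ x z : ℕ → X, InXSS x0 x → InXSS x0 z → ∀ y : ℕ → X,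
    IsClosed {l : ℝ | l ∈ Set.Icc (0:ℝ) 1 ∧ R (mixSeq M x l z) y} ∧
    IsClosed {l : ℝ | l ∈ Set.Icc (0:ℝ) 1 ∧ R y (mixSeq M x l z)}

/-- I5: monotonicity. -/
def AxI5 {X : Type*} (R : (ℕ → X) → (ℕ → X) → Prop) : Prop :=
  ∀ x y : ℕ → X, (∀ t, R (fun _ => x t) (fun _ => y t)) → R x y

/-- I6: convergence. -/
def AxI6 {X : Type*} (x0 : X) (R : (ℕ → X) → (ℕ → X) → Prop) : Prop :=
  ∀ (x : ℕ → X) (a : X) (k : ℕ),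
    (strictP R (bracket x0 a k) (bracket x0 (x k) k) →
      ∃ Tp, k ≤ Tp ∧ ∀ T, Tp ≤ T → R (truncMod x0 x k a T) x) ∧
    (strictP R (bracket x0 (x k) k) (bracket x0 a k) →
      ∃ Tm, k ≤ Tm ∧ ∀ T, Tm ≤ T → R x (truncMod x0 x k a T))

/-- `(u, w)` provides an AA representation for `R` on `X^∞` (with its
discounted-utility series converging for every stream). -/
def AARepInf {X : Type*} (M : MixtureSpace X)
    (R : (ℕ → X) → (ℕ → X) → Prop) (u : X → ℝ) (w : ℕ → ℝ) : Prop :=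
  M.linear u ∧ (∃ a b : X, u a ≠ u b) ∧ (∀ t, 0 ≤ w t) ∧ (∃ t, 0 < w t) ∧
  ∃ U : (ℕ → X) → ℝ,
    (∀ x : ℕ → X, Filter.Tendsto (fun N => ∑ t ∈ Finset.range N, w t * u (x t))
      Filter.atTop (nhds (U x))) ∧
    ∀ x y : ℕ → X, (R x y ↔ U x ≥ U y)

/-! ### Exponential discounting -/

/-- F2′: essentiality of period 1. -/
def AxF2' {X : Type*} {n : ℕ} (R : (Fin n → X) → (Fin n → X) → Prop)
    (h0 : 0 < n) : Prop :=
  ∃ (a b : X) (x : Fin n → X),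
    strictP R (Function.update x ⟨0, h0⟩ a) (Function.update x ⟨0, h0⟩ b)

/-- F6: impatience. -/
def AxF6 {X : Type*} {n : ℕ} (R : (Fin n → X) → (Fin n → X) → Prop)
    (h0 : 0 < n) (h1 : 1 < n) : Prop :=
  ∀ a b : X, strictP R (fun _ => a) (fun _ => b) →
    ∀ x : Fin n → X,
      strictP R (Function.update (Function.update x ⟨0, h0⟩ a) ⟨1, h1⟩ b)
               (Function.update (Function.update x ⟨0, h0⟩ b) ⟨1, h1⟩ a)

/-- `(x₂, …, xₙ, a)`. -/
def shiftApp {X : Type*} {n : ℕ} (x : Fin n → X) (a : X) : Fin n → X :=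
  fun t => if h : (t : ℕ) + 1 < n then x ⟨(t : ℕ) + 1, h⟩ else a

/-- F7: stationarity. -/
def AxF7 {X : Type*} {n : ℕ} (R : (Fin n → X) → (Fin n → X) → Prop)
    (h0 : 0 < n) : Prop :=
  ∀ (a : X) (x y : Fin n → X),
    (R (Function.update x ⟨0, h0⟩ a) (Function.update y ⟨0, h0⟩ a) ↔
     R (shiftApp x a) (shiftApp y a))

/-- `(u, δ)` provides an exponentially discounted expected utility representation. -/
def ExpRep {X : Type*} (M : MixtureSpace X) {n : ℕ}
    (R : (Fin n → X) → (Fin n → X) → Prop) (u : X → ℝ) (δ : ℝ) : Prop :=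
  M.linear u ∧ (∃ a b : X, u a ≠ u b) ∧ δ ∈ Set.Ioo (0:ℝ) 1 ∧
  ∀ x y : Fin n → X,
    (R x y ↔ (∑ t : Fin n, δ ^ (t : ℕ) * u (x t)) ≥ ∑ t : Fin n, δ ^ (t : ℕ) * u (y t))

/-- I2′: essentiality of period 1 (infinite horizon). -/
def AxI2' {X : Type*} (x0 : X) (R : (ℕ → X) → (ℕ → X) → Prop) : Prop :=
  ∃ a b : X, strictP R (bracket x0 a 0) (fun _ => x0) ∧
    strictP R (fun _ => x0) (bracket x0 b 0)

/-- `(a, x₁, x₂, …)`. -/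
def consSeq {X : Type*} (a : X) (x : ℕ → X) : ℕ → X :=
  fun t => if t = 0 then a else x (t - 1)

/-- I7: stationarity (infinite horizon). -/
def AxI7 {X : Type*} (R : (ℕ → X) → (ℕ → X) → Prop) : Prop :=
  ∀ (a : X) (x y : ℕ → X), (R (consSeq a x) (consSeq a y) ↔ R x y)

/-- `(u, δ)` provides an exponentially discounted expected utility representation
on `X^∞`, with converging series. -/
def ExpRepInf {X : Type*} (M : MixtureSpace X)
    (R : (ℕ → X) → (ℕ → X) → Prop) (u : X → ℝ) (δ : ℝ) : Prop :=
  M.linear u ∧ (∃ a b : X, u a ≠ u b) ∧ δ ∈ Set.Ioo (0:ℝ) 1 ∧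
  ∃ U : (ℕ → X) → ℝ,
    (∀ x : ℕ → X, Filter.Tendsto (fun N => ∑ t ∈ Finset.range N, δ ^ t * u (x t))
      Filter.atTop (nhds (U x))) ∧
    ∀ x y : ℕ → X, (R x y ↔ U x ≥ U y)

/-! ### Semi-hyperbolic discounting -/

/-- The SH(T) discount function at (1-based) period `t`:
`D 1 = 1`, `D t = β₁⋯β_{t−1} δ^{t−1}` for `2 ≤ t ≤ T`,
`D t = β₁⋯β_{T−1} δ^{t−1}` for `t > T`. -/
noncomputable def SHD (T : ℕ) (β : ℕ → ℝ) (δ : ℝ) (t : ℕ) : ℝ :=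
  (∏ i ∈ Finset.Icc 1 (min t T - 1), β i) * δ ^ (t - 1)

/-- Parameter restrictions: `0 < β₁ ≤ … ≤ β_{T−1} ≤ 1` and `δ ∈ (0,1)`. -/
def SHParams (T : ℕ) (β : ℕ → ℝ) (δ : ℝ) : Prop :=
  (∀ i : ℕ, 1 ≤ i → i ≤ T - 1 → 0 < β i ∧ β i ≤ 1) ∧
  (∀ i : ℕ, 1 ≤ i → i + 1 ≤ T - 1 → β i ≤ β (i + 1)) ∧
  δ ∈ Set.Ioo (0:ℝ) 1

/-- `(u, β, δ)` provides an SH(T) discounted expected utility representation on `X^n`. -/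
def SHRep {X : Type*} (M : MixtureSpace X) {n : ℕ}
    (R : (Fin n → X) → (Fin n → X) → Prop)
    (T : ℕ) (β : ℕ → ℝ) (δ : ℝ) (u : X → ℝ) : Prop :=
  M.linear u ∧ (∃ a b : X, u a ≠ u b) ∧ SHParams T β δ ∧
  ∀ x y : Fin n → X,
    (R x y ↔ (∑ s : Fin n, SHD T β δ ((s : ℕ) + 1) * u (x s)) ≥
      ∑ s : Fin n, SHD T β δ ((s : ℕ) + 1) * u (y s))

/-- F2″: essentiality of (1-based) periods `1, …, T`. -/
def AxF2'' {X : Type*} {n : ℕ} (R : (Fin n → X) → (Fin n → X) → Prop)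
    (T : ℕ) (hTn : T ≤ n) : Prop :=
  ∃ (a b : X) (x : Fin n → X), ∀ i : ℕ, ∀ hi : i < T,
    strictP R (Function.update x ⟨i, lt_of_lt_of_le hi hTn⟩ a)
             (Function.update x ⟨i, lt_of_lt_of_le hi hTn⟩ b)

/-- F6′: impatience between (1-based) periods `T` and `T+1`. -/
def AxF6' {X : Type*} {n : ℕ} (R : (Fin n → X) → (Fin n → X) → Prop)
    (T : ℕ) (h1 : T - 1 < n) (h2 : T < n) : Prop :=
  ∀ a b : X, strictP R (fun _ => a) (fun _ => b) →
    ∀ x : Fin n → X,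
      strictP R (Function.update (Function.update x ⟨T-1, h1⟩ a) ⟨T, h2⟩ b)
               (Function.update (Function.update x ⟨T-1, h1⟩ b) ⟨T, h2⟩ a)

/-- Delete (0-based) coordinate `i`, shift the rest left, and append `a` at the end. -/
def delIns {X : Type*} {n : ℕ} (x : Fin n → X) (i : ℕ) (a : X) : Fin n → X :=
  fun s => if (s : ℕ) < i then x s
    else if h : (s : ℕ) + 1 < n then x ⟨(s : ℕ) + 1, h⟩ else a

/-- F7′: stationarity from (1-based) period `T`. -/
def AxF7' {X : Type*} {n : ℕ} (R : (Fin n → X) → (Fin n → X) → Prop)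
    (T : ℕ) (h1 : T - 1 < n) : Prop :=
  ∀ (a : X) (x y : Fin n → X), (∀ s : Fin n, (s : ℕ) < T - 1 → x s = y s) →
    (R (Function.update x ⟨T-1, h1⟩ a) (Function.update y ⟨T-1, h1⟩ a) ↔
     R (delIns x (T-1) a) (delIns y (T-1) a))

/-- `(x₁, …, x_{t−2}, a, b, x_{t+2}, …, xₙ, x_{t−1})` where `i` is the 0-based
index of period `t` (so `i = t − 1`). -/
def ebShiftFin {X : Type*} {n : ℕ} (x : Fin n → X) (i : ℕ) (hi : i - 1 < n)
    (a b : X) : Fin n → X :=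
  fun s => if (s : ℕ) < i - 1 then x s
    else if (s : ℕ) = i - 1 then a
    else if (s : ℕ) = i then b
    else if h : (s : ℕ) + 1 < n then x ⟨(s : ℕ) + 1, h⟩
    else x ⟨i - 1, hi⟩

/-- F8: early bias. -/
def AxF8 {X : Type*} {n : ℕ} (R : (Fin n → X) → (Fin n → X) → Prop)
    (T : ℕ) (hTn : T < n) : Prop :=
  ∀ a b c d : X,
    strictP R (fun _ => a) (fun _ => c) → strictP R (fun _ => d) (fun _ => b) →
    ∀ x : Fin n → X, ∀ i : ℕ, ∀ hi1 : 1 ≤ i, ∀ hi2 : i ≤ T - 1,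
      (R (Function.update (Function.update x ⟨i, by omega⟩ a) ⟨i+1, by omega⟩ b)
         (Function.update (Function.update x ⟨i, by omega⟩ c) ⟨i+1, by omega⟩ d) ∧
       R (Function.update (Function.update x ⟨i, by omega⟩ c) ⟨i+1, by omega⟩ d)
         (Function.update (Function.update x ⟨i, by omega⟩ a) ⟨i+1, by omega⟩ b)) →
      R (ebShiftFin x i (by omega) a b) (ebShiftFin x i (by omega) c d)

/-- `(u, β, δ)` provides an SH(T) discounted expected utility representation on `X^∞`. -/
def SHRepInf {X : Type*} (M : MixtureSpace X)
    (R : (ℕ → X) → (ℕ → X) → Prop)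
    (T : ℕ) (β : ℕ → ℝ) (δ : ℝ) (u : X → ℝ) : Prop :=
  M.linear u ∧ (∃ a b : X, u a ≠ u b) ∧ SHParams T β δ ∧
  ∃ U : (ℕ → X) → ℝ,
    (∀ x : ℕ → X, Filter.Tendsto
      (fun N => ∑ t ∈ Finset.range N, SHD T β δ (t + 1) * u (x t))
      Filter.atTop (nhds (U x))) ∧
    ∀ x y : ℕ → X, (R x y ↔ U x ≥ U y)

/-- I2″: essentiality of (1-based) periods `1, …, T`. -/
def AxI2'' {X : Type*} (x0 : X) (R : (ℕ → X) → (ℕ → X) → Prop) (T : ℕ) : Prop :=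
  ∃ a b : X, ∀ t : ℕ, t < T →
    strictP R (bracket x0 a t) (fun _ => x0) ∧ strictP R (fun _ => x0) (bracket x0 b t)

/-- Delete (0-based) coordinate `i` of an infinite stream. -/
def delSeq {X : Type*} (x : ℕ → X) (i : ℕ) : ℕ → X :=
  fun t => if t < i then x t else x (t + 1)

/-- I7′: stationarity from (1-based) period `T`. -/
def AxI7' {X : Type*} (R : (ℕ → X) → (ℕ → X) → Prop) (T : ℕ) : Prop :=
  ∀ (a : X) (x y : ℕ → X), (∀ t, t < T - 1 → x t = y t) →
    (R (Function.update x (T-1) a) (Function.update y (T-1) a) ↔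
     R (delSeq x (T-1)) (delSeq y (T-1)))

/-- `(x₁, …, x_{t−2}, a, b, x_{t+2}, …)` where `i = t − 1` (0-based index of period `t`). -/
def ebShiftSeq {X : Type*} (x : ℕ → X) (i : ℕ) (a b : X) : ℕ → X :=
  fun s => if s < i - 1 then x s
    else if s = i - 1 then a
    else if s = i then b
    else x (s + 1)

/-- I8: early bias (infinite horizon). -/
def AxI8 {X : Type*} (R : (ℕ → X) → (ℕ → X) → Prop) (T : ℕ) : Prop :=
  ∀ a b c d : X,
    strictP R (fun _ => a) (fun _ => c) → strictP R (fun _ => d) (fun _ => b) →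
    ∀ x : ℕ → X, ∀ i : ℕ, 1 ≤ i → i ≤ T - 1 →
      (R (Function.update (Function.update x i a) (i+1) b)
         (Function.update (Function.update x i c) (i+1) d) ∧
       R (Function.update (Function.update x i c) (i+1) d)
         (Function.update (Function.update x i a) (i+1) b)) →
      R (ebShiftSeq x i a b) (ebShiftSeq x i c d)

/-- Auxiliary: the discounted sum of a stream equal to `c` except at index `k`. -/
lemma tendsto_bracket_aux {X : Type*} (u : X → ℝ) {δ : ℝ} (hδ0 : 0 ≤ δ) (hδ1 : δ < 1)
    (c a : X) (k : ℕ) :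
    Filter.Tendsto
      (fun N => ∑ t ∈ Finset.range N, δ ^ t * u (if t = k then a else c))
      Filter.atTop (nhds (u c * (1 - δ)⁻¹ + δ ^ k * (u a - u c))) := by
  have hgeo := (hasSum_geometric_of_lt_one hδ0 hδ1).tendsto_sum_nat
  have h1 : Filter.Tendsto
      (fun N => (∑ t ∈ Finset.range N, δ ^ t) * u c + δ ^ k * (u a - u c))
      Filter.atTop (nhds ((1 - δ)⁻¹ * u c + δ ^ k * (u a - u c))) :=
    (hgeo.mul_const _).add_const _
  have heq : u c * (1 - δ)⁻¹ + δ ^ k * (u a - u c)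
      = (1 - δ)⁻¹ * u c + δ ^ k * (u a - u c) := by ring
  rw [heq]
  refine h1.congr' ?_
  filter_upwards [Filter.eventually_ge_atTop (k + 1)] with N hN
  have hk : k ∈ Finset.range N := Finset.mem_range.2 (by omega)
  calc (∑ t ∈ Finset.range N, δ ^ t) * u c + δ ^ k * (u a - u c)
      = ∑ t ∈ Finset.range N,
          (δ ^ t * u c + if t = k then δ ^ t * (u a - u c) else 0) := by
        rw [Finset.sum_add_distrib, Finset.sum_mul, Finset.sum_ite_eq' (Finset.range N) k
          (fun t => δ ^ t * (u a - u c))]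
        simp [hk]
    _ = ∑ t ∈ Finset.range N, δ ^ t * u (if t = k then a else c) := by
        refine Finset.sum_congr rfl fun t _ => ?_
        by_cases h : t = k <;> simp [h] <;> ring

/-- Uniqueness of the exponentially discounted expected utility
representation on `X^∞`. -/
theorem exp_discounting_infinite_unique {X : Type*} (M : MixtureSpace X)
    (R : (ℕ → X) → (ℕ → X) → Prop) (u u' : X → ℝ) (δ δ' : ℝ)
    (h : ExpRepInf M R u δ) (h' : ExpRepInf M R u' δ') :
    (∃ A > (0:ℝ), ∃ B : ℝ, ∀ x : X, u x = A * u' x + B) ∧ δ = δ' := by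
  obtain ⟨hlin, ⟨a0, b0, hab⟩, ⟨hδ0, hδ1⟩, U, hU, hrep⟩ := h
  obtain ⟨hlin', -, ⟨hδ0', hδ1'⟩, U', hU', hrep'⟩ := h'
  have hS : (0:ℝ) < (1 - δ)⁻¹ := inv_pos.2 (by linarith)
  have hS' : (0:ℝ) < (1 - δ')⁻¹ := inv_pos.2 (by linarith)
  -- values of U on bracket streams
  have hUb : ∀ c a k, U (fun t => if t = k then a else c)
      = u c * (1 - δ)⁻¹ + δ ^ k * (u a - u c) := fun c a k =>
    tendsto_nhds_unique (hU _) (tendsto_bracket_aux u hδ0.le hδ1 c a k)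
  have hUb' : ∀ c a k, U' (fun t => if t = k then a else c)
      = u' c * (1 - δ')⁻¹ + δ' ^ k * (u' a - u' c) := fun c a k =>
    tendsto_nhds_unique (hU' _) (tendsto_bracket_aux u' hδ0'.le hδ1' c a k)
  have hconst : ∀ c : X, (fun _ : ℕ => c) = (fun t : ℕ => if t = 0 then c else c) := by
    intro c; funext t; simp
  have hUc : ∀ c, U (fun _ => c) = u c * (1 - δ)⁻¹ := by
    intro c; rw [hconst c, hUb]; ring
  have hUc' : ∀ c, U' (fun _ => c) = u' c * (1 - δ')⁻¹ := by
    intro c; rw [hconst c, hUb']; ring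
  -- ordinal equivalence of u and u'
  have ord : ∀ p q : X, u q ≤ u p ↔ u' q ≤ u' p := by
    intro p q
    have h1 : R (fun _ => p) (fun _ => q) ↔ u q ≤ u p := by
      rw [hrep, hUc, hUc, ge_iff_le, mul_le_mul_iff_of_pos_right hS]
    have h2 : R (fun _ => p) (fun _ => q) ↔ u' q ≤ u' p := by
      rw [hrep', hUc', hUc', ge_iff_le, mul_le_mul_iff_of_pos_right hS']
    rw [← h1, h2]
  have ind : ∀ p q : X, u p = u q → u' p = u' q := by
    intro p q hpq
    exact le_antisymm ((ord q p).1 hpq.le) ((ord p q).1 hpq.ge)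
  -- find a, b with u b < u a
  obtain ⟨a, b, hba⟩ : ∃ a b : X, u b < u a := by
    rcases hab.lt_or_gt with hh | hh
    exacts [⟨b0, a0, hh⟩, ⟨a0, b0, hh⟩]
  have hd : 0 < u a - u b := by linarith
  have hba' : u' b < u' a := by
    by_contra hcon
    push_neg at hcon
    exact absurd ((ord b a).2 hcon) (not_le.2 hba)
  have hd' : 0 < u' a - u' b := by linarith
  set A := (u a - u b) / (u' a - u' b) with hAdef
  set B := u b - A * u' b with hBdef
  have hAd : A * (u' a - u' b) = u a - u b := div_mul_cancel₀ _ hd'.ne'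
  have hAa : A * u' a + B = u a := by rw [hBdef]; linear_combination hAd
  have hAb : A * u' b + B = u b := by rw [hBdef]; ring
  have hApos : 0 < A := div_pos hd hd'
  constructor
  · refine ⟨A, hApos, B, fun x => ?_⟩
    rcases le_or_gt (u x) (u a) with h1 | h1
    · rcases le_or_gt (u b) (u x) with h2 | h2
      · -- middle case
        set l := (u x - u b) / (u a - u b) with hldef
        have hl : l ∈ Set.Icc (0:ℝ) 1 :=
          ⟨div_nonneg (by linarith) hd.le, (div_le_one hd).2 (by linarith)⟩
        have hld : l * (u a - u b) = u x - u b := div_mul_cancel₀ _ hd.ne'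
        have hmix : u (M.mix a l b) = u x := by
          rw [hlin a b l hl]; linear_combination hld
        have h'x : u' x = l * u' a + (1 - l) * u' b := by
          rw [← ind _ _ hmix, hlin' a b l hl]
        rw [h'x]
        linear_combination -hld - l * hAa - (1 - l) * hAb
      · -- low case
        set l := (u b - u x) / (u a - u x) with hldef
        have hax : 0 < u a - u x := by linarith
        have hl : l ∈ Set.Icc (0:ℝ) 1 :=
          ⟨div_nonneg (by linarith) hax.le, (div_le_one hax).2 (by linarith)⟩
        have hld : l * (u a - u x) = u b - u x := div_mul_cancel₀ _ hax.ne'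
        have hl1 : (1 : ℝ) - l ≠ 0 := by
          have : l < 1 := (div_lt_one hax).2 (by linarith)
          linarith
        have hmix : u (M.mix a l x) = u b := by
          rw [hlin a x l hl]; linear_combination hld
        have h'x : l * u' a + (1 - l) * u' x = u' b := by
          rw [← hlin' a x l hl]; exact ind _ _ hmix
        refine mul_left_cancel₀ hl1 ?_
        have hux : (1 - l) * u x = u b - l * u a := by linear_combination hld
        linear_combination hux - A * h'x - hAb + l * hAa
    · -- high case
      set l := (u a - u b) / (u x - u b) with hldef
      have hxb : 0 < u x - u b := by linarith
      have hl : l ∈ Set.Icc (0:ℝ) 1 :=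
        ⟨div_nonneg hd.le hxb.le, (div_le_one hxb).2 (by linarith)⟩
      have hld : l * (u x - u b) = u a - u b := div_mul_cancel₀ _ hxb.ne'
      have hlne : l ≠ 0 := (div_pos hd hxb).ne'
      have hmix : u (M.mix x l b) = u a := by
        rw [hlin x b l hl]; linear_combination hld
      have h'x : l * u' x + (1 - l) * u' b = u' a := by
        rw [← hlin' x b l hl]; exact ind _ _ hmix
      refine mul_left_cancel₀ hlne ?_
      have hux : l * u x = u a - (1 - l) * u b := by linear_combination hld
      linear_combination hux - A * h'x - hAa + (1 - l) * hAb
  · -- δ = δ'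
    have hiff : ∀ l ∈ Set.Icc (0:ℝ) 1, (l ≤ δ ↔ l ≤ δ') := by
      intro l hl
      have e1 : R (fun t => if t = 1 then a else b) (fun t => if t = 0 then M.mix a l b else b)
          ↔ l ≤ δ := by
        rw [hrep, hUb, hUb, hlin a b l hl]
        constructor
        · intro hh; nlinarith
        · intro hh; simp only [ge_iff_le]; nlinarith
      have e2 : R (fun t => if t = 1 then a else b) (fun t => if t = 0 then M.mix a l b else b)
          ↔ l ≤ δ' := by
        rw [hrep', hUb', hUb', hlin' a b l hl]
        constructor
        · intro hh; nlinarith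
        · intro hh; simp only [ge_iff_le]; nlinarith
      rw [← e1, e2]
    have h1 : δ' ≤ δ := (hiff δ' ⟨hδ0'.le, hδ1'.le⟩).2 le_rfl
    have h2 : δ ≤ δ' := (hiff δ ⟨hδ0.le, hδ1.le⟩).1 le_rfl
    linarith
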